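/- arXiv:1101.0826 — 2 statements merged into one kernel-verified Lean document; each statement's English description precedes it below -/
import Mathlib

section
/- Let I = (y² − x³) ⊆ ℝ[x,y] and A = ℝ[x,y]/I. The polynomial x is nonnegative on V_ℝ(I), but its image in A is not strongly nonnegative at the point P = (0,0): the ℝ-algebra homomorphism φ : A → ℝ[ε]/(ε²) at P with φ(x) = −ε, φ(y) = 0 sends x to an element that is not nonnegative. Consequently, x is not a sum of squares modulo I. -/
open MvPolynomial Polynomial

noncomputable section

/-- The ring `ℝ[ε]/(ε^m)`. -/
abbrev Eps (m : ℕ) : Type := AdjoinRoot ((Polynomial.X : Polynomial ℝ) ^ m)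

/-- An element `a₀ + a₁ε + ⋯ + a_{m-1}ε^{m-1}` of `ℝ[ε]/(ε^m)` is nonnegative if it is zero
or `a_N > 0` where `N = min {j : a_j ≠ 0}` (equivalently some, or any, polynomial
representative of it has positive lowest-order nonzero coefficient). -/
def EpsNonneg {m : ℕ} (z : Eps m) : Prop :=
  z = 0 ∨ ∃ p : Polynomial ℝ, AdjoinRoot.mk _ p = z ∧ 0 < p.coeff p.natTrailingDegree

/-- The real vanishing set `V_ℝ(I) ⊆ ℝⁿ` of an ideal `I ⊆ ℝ[x₁,…,xₙ]`. -/
def realVariety {n : ℕ} (I : Ideal (MvPolynomial (Fin n) ℝ)) : Set (Fin n → ℝ) :=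
  {P | ∀ p ∈ I, MvPolynomial.eval P p = 0}

/-- An `ℝ`-algebra homomorphism `φ : A → ℝ[ε]/(ε^m)` is at `P` if composing it with the
unique `ℝ`-algebra homomorphism `ℝ[ε]/(ε^m) → ℝ` gives evaluation at `P`; i.e. for every `p`,
`φ(p mod I)` agrees with `eval P p` modulo the ideal `(ε)`. -/
def AtPoint {n m : ℕ} (I : Ideal (MvPolynomial (Fin n) ℝ)) (P : Fin n → ℝ)
    (φ : (MvPolynomial (Fin n) ℝ ⧸ I) →ₐ[ℝ] Eps m) : Prop :=
  ∀ p : MvPolynomial (Fin n) ℝ,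
    φ (Ideal.Quotient.mk I p) - algebraMap ℝ (Eps m) (MvPolynomial.eval P p)
      ∈ Ideal.span {AdjoinRoot.root ((Polynomial.X : Polynomial ℝ) ^ m)}

/-- `f ∈ A = ℝ[x₁,…,xₙ]/I` is strongly nonnegative at `P` if for every `m` and every
`ℝ`-algebra homomorphism `φ : A → ℝ[ε]/(ε^m)` at `P`, `φ(f)` is nonnegative. -/
def StronglyNonnegAt {n : ℕ} (I : Ideal (MvPolynomial (Fin n) ℝ)) (P : Fin n → ℝ)
    (f : MvPolynomial (Fin n) ℝ ⧸ I) : Prop :=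
  ∀ (m : ℕ) (φ : (MvPolynomial (Fin n) ℝ ⧸ I) →ₐ[ℝ] Eps m),
    AtPoint I P φ → EpsNonneg (φ f)

/-- `f` is strongly nonnegative on `V(I)` if it is strongly nonnegative at every `P ∈ V_ℝ(I)`. -/
def StronglyNonneg {n : ℕ} (I : Ideal (MvPolynomial (Fin n) ℝ))
    (f : MvPolynomial (Fin n) ℝ ⧸ I) : Prop :=
  ∀ P ∈ realVariety I, StronglyNonnegAt I P f

/-- `f` is `k`-sos modulo `I`: `f ≡ Σᵢ gᵢ² (mod I)` with each `deg gᵢ ≤ k`. -/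
def KSosMod {n : ℕ} (I : Ideal (MvPolynomial (Fin n) ℝ)) (k : ℕ)
    (f : MvPolynomial (Fin n) ℝ) : Prop :=
  ∃ (r : ℕ) (g : Fin r → MvPolynomial (Fin n) ℝ),
    (∀ i, (g i).totalDegree ≤ k) ∧ f - ∑ i, (g i) ^ 2 ∈ I

/-- `f` is a sum of squares modulo `I` (no degree bound). -/
def SosMod {n : ℕ} (I : Ideal (MvPolynomial (Fin n) ℝ)) (f : MvPolynomial (Fin n) ℝ) : Prop :=
  ∃ (r : ℕ) (g : Fin r → MvPolynomial (Fin n) ℝ), f - ∑ i, (g i) ^ 2 ∈ I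

/-- `I` is `(d,k)`-sos: every polynomial of degree at most `d` which is nonnegative on
`V_ℝ(I)` is `k`-sos modulo `I`. -/
def IsDKSos {n : ℕ} (I : Ideal (MvPolynomial (Fin n) ℝ)) (d k : ℕ) : Prop :=
  ∀ f : MvPolynomial (Fin n) ℝ, f.totalDegree ≤ d →
    (∀ P ∈ realVariety I, 0 ≤ MvPolynomial.eval P f) → KSosMod I k f

/-- `I` is weakly `(1,k)`-sos: every polynomial of degree at most `1` whose image in
`A = ℝ[x]/I` is strongly nonnegative on `V(I)` is `k`-sos modulo `I`. -/
def WeaklyOneKSos {n : ℕ} (I : Ideal (MvPolynomial (Fin n) ℝ)) (k : ℕ) : Prop :=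
  ∀ f : MvPolynomial (Fin n) ℝ, f.totalDegree ≤ 1 →
    StronglyNonneg I (Ideal.Quotient.mk I f) → KSosMod I k f

/-- The maximal ideal `m_P ⊆ A = ℝ[x]/I` of functions vanishing at `P`. -/
def mIdeal {n : ℕ} (I : Ideal (MvPolynomial (Fin n) ℝ)) (P : Fin n → ℝ) :
    Ideal (MvPolynomial (Fin n) ℝ ⧸ I) :=
  Ideal.map (Ideal.Quotient.mk I) (RingHom.ker (MvPolynomial.eval P))

/-- A commutative ring is a regular local ring if it is Noetherian, local, and the dimension
of its cotangent space (equivalently, of its tangent space) over the residue field equals its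
Krull dimension. -/
def IsRegularLocal (R : Type) [CommRing R] : Prop :=
  IsNoetherianRing R ∧ ∃ _h : IsLocalRing R,
    (Module.finrank (IsLocalRing.ResidueField R) (IsLocalRing.CotangentSpace R) :
      WithBot (WithTop ℕ)) = ringKrullDim R

/-- `V(I)` is nonsingular at `P` if the localization of `A = ℝ[x]/I` at the maximal ideal
`m_P` is a regular local ring. -/
def IsNonsingularAt {n : ℕ} (I : Ideal (MvPolynomial (Fin n) ℝ)) (P : Fin n → ℝ) : Prop :=
  ∃ hp : (mIdeal I P).IsPrime, IsRegularLocal (@Localization.AtPrime _ _ (mIdeal I P) hp)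

/-- The tangent space of `V(I)` at `P`, viewed as the set of vectors `v ∈ ℝⁿ` such that there
is an `ℝ`-algebra homomorphism `A → ℝ[ε]/(ε²)` at `P` sending each `xᵢ` to `Pᵢ + vᵢ ε`. -/
def tangentVectors {n : ℕ} (I : Ideal (MvPolynomial (Fin n) ℝ)) (P : Fin n → ℝ) :
    Set (Fin n → ℝ) :=
  {v | ∃ φ : (MvPolynomial (Fin n) ℝ ⧸ I) →ₐ[ℝ] Eps 2,
    ∀ i : Fin n, φ (Ideal.Quotient.mk I (MvPolynomial.X i)) =
      algebraMap ℝ (Eps 2) (P i) + (v i) • AdjoinRoot.root ((Polynomial.X : Polynomial ℝ) ^ 2)}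

/-- `P ∈ V_ℝ(I)` is convex-singular: `P` is a singular point of `V(I)`, lies on the relative
boundary of `conv(V_ℝ(I))`, and the (affine) tangent space at `P` meets the relative interior
of `conv(V_ℝ(I))`. -/
def ConvexSingular {n : ℕ} (I : Ideal (MvPolynomial (Fin n) ℝ)) (P : Fin n → ℝ) : Prop :=
  ¬ IsNonsingularAt I P ∧
  P ∈ intrinsicFrontier ℝ (convexHull ℝ (realVariety I)) ∧
  ∃ v ∈ tangentVectors I P, P + v ∈ intrinsicInterior ℝ (convexHull ℝ (realVariety I))

/-- The `k`-th theta body of `I`. -/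
def thetaBody {n : ℕ} (I : Ideal (MvPolynomial (Fin n) ℝ)) (k : ℕ) : Set (Fin n → ℝ) :=
  {x | ∀ f : MvPolynomial (Fin n) ℝ, f.totalDegree ≤ 1 → KSosMod I k f →
    0 ≤ MvPolynomial.eval x f}

/-- `I` is `TH_k`-exact if the `k`-th theta body equals the closure of the convex hull of
`V_ℝ(I)`. -/
def ThetaExact {n : ℕ} (I : Ideal (MvPolynomial (Fin n) ℝ)) (k : ℕ) : Prop :=
  thetaBody I k = closure (convexHull ℝ (realVariety I))

/-- `I` is real radical: whenever `f^(2m) + Σᵢ gᵢ² ∈ I` for some `m ≥ 1`, we have `f ∈ I`. -/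
def IsRealRadical {n : ℕ} (I : Ideal (MvPolynomial (Fin n) ℝ)) : Prop :=
  ∀ f : MvPolynomial (Fin n) ℝ,
    (∃ m : ℕ, 1 ≤ m ∧ ∃ (r : ℕ) (g : Fin r → MvPolynomial (Fin n) ℝ),
      f ^ (2 * m) + ∑ i, (g i) ^ 2 ∈ I) → f ∈ I

/-- A formal power series is nonnegative if it is zero or its leading (lowest-order nonzero)
coefficient is positive. -/
def PSNonneg (F : PowerSeries ℝ) : Prop :=
  F = 0 ∨ ∃ N : ℕ, 0 < PowerSeries.coeff (R := ℝ) N F ∧ ∀ j < N, PowerSeries.coeff (R := ℝ) j F = 0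

/-- An `ℝ`-algebra homomorphism `φ : A → ℝ[[t]]` is at `P` if the preimage of the ideal `(t)`
is the maximal ideal of functions vanishing at `P`. -/
def PSAtPoint {n : ℕ} (I : Ideal (MvPolynomial (Fin n) ℝ)) (P : Fin n → ℝ)
    (φ : (MvPolynomial (Fin n) ℝ ⧸ I) →ₐ[ℝ] PowerSeries ℝ) : Prop :=
  ∀ p : MvPolynomial (Fin n) ℝ,
    (PowerSeries.constantCoeff (R := ℝ) (φ (Ideal.Quotient.mk I p)) = 0 ↔ MvPolynomial.eval P p = 0)

/-- The linear function induced by a polynomial `f` (of degree at most 1) on tangent vectors: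
`v ↦ Σᵢ (∂f/∂xᵢ) vᵢ`. -/
def linGrad {n : ℕ} (f : MvPolynomial (Fin n) ℝ) (v : Fin n → ℝ) : ℝ :=
  ∑ i : Fin n, MvPolynomial.eval (0 : Fin n → ℝ) (MvPolynomial.pderiv i f) * v i


-- root² = 0 in Eps 2
lemma root_sq : (AdjoinRoot.root ((Polynomial.X : Polynomial ℝ) ^ 2)) ^ 2 = 0 := by
  rw [← AdjoinRoot.mk_X, ← map_pow, AdjoinRoot.mk_self]

lemma root_ne_zero : (AdjoinRoot.root ((Polynomial.X : Polynomial ℝ) ^ 2)) ≠ 0 := by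
  intro h
  rw [← AdjoinRoot.mk_X] at h
  have : ((Polynomial.X : Polynomial ℝ) ^ 2) ∣ ((Polynomial.X : Polynomial ℝ) - 0) := by
    rw [← AdjoinRoot.mk_eq_mk]; simpa using h
  rw [sub_zero] at this
  have := Polynomial.natDegree_le_of_dvd this Polynomial.X_ne_zero
  simp [Polynomial.natDegree_X_pow] at this

lemma diff_mem {R : Type*} [CommRing R] [Algebra ℝ R]
    (f g : MvPolynomial (Fin 2) ℝ →ₐ[ℝ] R) (J : Ideal R)
    (h : ∀ i, f (MvPolynomial.X i) - g (MvPolynomial.X i) ∈ J)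
    (p : MvPolynomial (Fin 2) ℝ) : f p - g p ∈ J := by
  induction p using MvPolynomial.induction_on with
  | C a => simp [AlgHom.commutes]
  | add p q hp hq =>
      have : f (p + q) - g (p + q) = (f p - g p) + (f q - g q) := by
        simp [map_add]; ring
      rw [this]; exact J.add_mem hp hq
  | mul_X p i hp =>
      have : f (p * MvPolynomial.X i) - g (p * MvPolynomial.X i) =
          f p * (f (MvPolynomial.X i) - g (MvPolynomial.X i)) +
          (f p - g p) * g (MvPolynomial.X i) := by
        simp [map_mul]; ring
      rw [this]
      exact J.add_mem (J.mul_mem_left _ (h i)) (J.mul_mem_right _ hp)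

lemma not_nonneg_neg_root :
    ¬ EpsNonneg (- AdjoinRoot.root ((Polynomial.X : Polynomial ℝ) ^ 2)) := by
  rintro (h0 | ⟨p, hp, hpos⟩)
  · exact root_ne_zero (neg_eq_zero.mp h0)
  · have : AdjoinRoot.mk ((Polynomial.X : Polynomial ℝ) ^ 2) p =
        AdjoinRoot.mk _ (-Polynomial.X) := by rw [hp, map_neg, AdjoinRoot.mk_X]
    rw [AdjoinRoot.mk_eq_mk] at this
    obtain ⟨q, hq⟩ := this
    have hpeq : p = Polynomial.X ^ 2 * q - Polynomial.X := by linear_combination hq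
    have h0 : p.coeff 0 = 0 := by
      rw [hpeq]; simp [Polynomial.coeff_mul, Finset.Nat.antidiagonal_zero]
    have h1 : p.coeff 1 = -1 := by
      rw [hpeq]
      simp [Polynomial.coeff_sub, Polynomial.coeff_X_one]
      rw [show ((Polynomial.X:ℝ[X])^2 * q) = Polynomial.X * (Polynomial.X * q) by ring]
      simp [Polynomial.coeff_X_mul]
    have hpne : p ≠ 0 := fun h => by simp [h] at h1
    have hle : p.natTrailingDegree ≤ 1 :=
      Polynomial.natTrailingDegree_le_of_ne_zero (by rw [h1]; norm_num)
    have hne0 : p.natTrailingDegree ≠ 0 := by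
      rw [Ne, Polynomial.natTrailingDegree_eq_zero]
      push_neg
      exact ⟨hpne, by simpa using h0⟩
    have : p.natTrailingDegree = 1 := le_antisymm hle (Nat.one_le_iff_ne_zero.mpr hne0)
    rw [this, h1] at hpos
    linarith


end

/-- For `I = (y² − x³) ⊆ ℝ[x,y]`: the polynomial `x` is nonnegative on `V_ℝ(I)` but its
image in `A = ℝ[x,y]/I` is not strongly nonnegative at `P = (0,0)`, as witnessed by the
homomorphism `φ : A → ℝ[ε]/(ε²)` at `P` with `φ(x) = −ε`, `φ(y) = 0`; consequently `x` is
not a sum of squares modulo `I`. -/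
theorem cusp_example :
    ∀ I : Ideal (MvPolynomial (Fin 2) ℝ),
      I = Ideal.span {(MvPolynomial.X 1 : MvPolynomial (Fin 2) ℝ) ^ 2 -
        (MvPolynomial.X 0) ^ 3} →
    (∀ Q ∈ realVariety I, 0 ≤ MvPolynomial.eval Q (MvPolynomial.X 0 : MvPolynomial (Fin 2) ℝ)) ∧
    (∃ φ : (MvPolynomial (Fin 2) ℝ ⧸ I) →ₐ[ℝ] Eps 2,
      AtPoint I (0 : Fin 2 → ℝ) φ ∧
      φ (Ideal.Quotient.mk I (MvPolynomial.X 0)) =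
        - AdjoinRoot.root ((Polynomial.X : Polynomial ℝ) ^ 2) ∧
      φ (Ideal.Quotient.mk I (MvPolynomial.X 1)) = 0 ∧
      ¬ EpsNonneg (φ (Ideal.Quotient.mk I (MvPolynomial.X 0)))) ∧
    ¬ StronglyNonnegAt I (0 : Fin 2 → ℝ)
      (Ideal.Quotient.mk I (MvPolynomial.X 0 : MvPolynomial (Fin 2) ℝ)) ∧
    ¬ SosMod I (MvPolynomial.X 0 : MvPolynomial (Fin 2) ℝ) := by
  
  intro I hI
  set w : MvPolynomial (Fin 2) ℝ :=
    (MvPolynomial.X 1) ^ 2 - (MvPolynomial.X 0) ^ 3 with hw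
  set ε : Eps 2 := AdjoinRoot.root ((Polynomial.X : Polynomial ℝ) ^ 2) with hε
  -- part 1
  have part1 : ∀ Q ∈ realVariety I, 0 ≤ MvPolynomial.eval Q
      (MvPolynomial.X 0 : MvPolynomial (Fin 2) ℝ) := by
    intro Q hQ
    have hwI : w ∈ I := by rw [hI]; exact Ideal.subset_span rfl
    have := hQ w hwI
    simp [hw, MvPolynomial.eval_X] at this ⊢
    have h3 : (0:ℝ) ≤ Q 0 ^ 3 := by nlinarith [sq_nonneg (Q 1)]
    exact (Odd.pow_nonneg_iff (by decide : Odd 3)).mp h3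
  -- φ construction
  set v : Fin 2 → Eps 2 := ![-ε, 0] with hv
  set ψ : MvPolynomial (Fin 2) ℝ →ₐ[ℝ] Eps 2 := MvPolynomial.aeval v with hψ
  have hψw : ψ w = 0 := by
    simp [hψ, hw, hv]
    rw [show (-ε) ^ 3 = -(ε ^ 2 * ε) by ring, root_sq]
    simp
  have hker : ∀ a ∈ I, ψ a = 0 := by
    intro a ha
    rw [hI, Ideal.mem_span_singleton] at ha
    obtain ⟨c, rfl⟩ := ha
    rw [map_mul, hψw, zero_mul]
  set φ : (MvPolynomial (Fin 2) ℝ ⧸ I) →ₐ[ℝ] Eps 2 := Ideal.Quotient.liftₐ I ψ hker with hφ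
  have hφmk : ∀ p, φ (Ideal.Quotient.mk I p) = ψ p := fun p =>
    Ideal.Quotient.liftₐ_apply I ψ hker _
  have hφ0 : φ (Ideal.Quotient.mk I (MvPolynomial.X 0)) = -ε := by
    rw [hφmk]; simp [hψ, hv]
  have hφ1 : φ (Ideal.Quotient.mk I (MvPolynomial.X 1)) = 0 := by
    rw [hφmk]; simp [hψ, hv]
  have hat : AtPoint I (0 : Fin 2 → ℝ) φ := by
    intro p
    have key := diff_mem (φ.comp (Ideal.Quotient.mkₐ ℝ I))
      ((Algebra.ofId ℝ (Eps 2)).comp (MvPolynomial.aeval (0 : Fin 2 → ℝ)))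
      (Ideal.span {ε}) ?_ p
    · have h1 : (φ.comp (Ideal.Quotient.mkₐ ℝ I)) p = φ (Ideal.Quotient.mk I p) := rfl
      have h2 : ((Algebra.ofId ℝ (Eps 2)).comp (MvPolynomial.aeval (0 : Fin 2 → ℝ))) p =
          algebraMap ℝ (Eps 2) (MvPolynomial.eval (0 : Fin 2 → ℝ) p) := by
        simp only [AlgHom.comp_apply, Algebra.ofId_apply]; rfl
      rwa [h1, h2] at key
    · intro i
      induction i using Fin.cases with
      | zero =>
        have heq : (φ.comp (Ideal.Quotient.mkₐ ℝ I)) (MvPolynomial.X 0) -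
            ((Algebra.ofId ℝ (Eps 2)).comp (MvPolynomial.aeval (0 : Fin 2 → ℝ)))
              (MvPolynomial.X 0) = -ε := by
          simp [AlgHom.comp_apply, Algebra.ofId_apply, Ideal.Quotient.mkₐ_eq_mk, hφ0]
        rw [heq]
        exact neg_mem (Ideal.subset_span rfl)
      | succ j =>
        induction j using Fin.cases with
        | succ k => exact k.elim0
        | zero =>
        have heq : (φ.comp (Ideal.Quotient.mkₐ ℝ I)) (MvPolynomial.X 1) -
            ((Algebra.ofId ℝ (Eps 2)).comp (MvPolynomial.aeval (0 : Fin 2 → ℝ)))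
              (MvPolynomial.X 1) = 0 := by
          simp [AlgHom.comp_apply, Algebra.ofId_apply, Ideal.Quotient.mkₐ_eq_mk, hφ1]
        simp only [show (Fin.succ 0 : Fin 2) = 1 from rfl]
        rw [heq]
        exact Ideal.zero_mem _
  have hnotnn : ¬ EpsNonneg (φ (Ideal.Quotient.mk I (MvPolynomial.X 0))) := by
    rw [hφ0]; exact not_nonneg_neg_root
  refine ⟨part1, ⟨φ, hat, hφ0, hφ1, hnotnn⟩, ?_, ?_⟩
  · intro hsn
    exact hnotnn (hsn 2 φ hat)
  · rintro ⟨r, g, hg⟩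
    -- φ(x) = Σ φ(g i)²
    have hmkeq : Ideal.Quotient.mk I (MvPolynomial.X 0) =
        Ideal.Quotient.mk I (∑ i, (g i) ^ 2) := by
      rw [Ideal.Quotient.eq]; exact hg
    choose p hp using fun i => AdjoinRoot.mk_surjective (φ (Ideal.Quotient.mk I (g i)))
    have hsum : AdjoinRoot.mk ((Polynomial.X : Polynomial ℝ) ^ 2) (∑ i, (p i) ^ 2) = -ε := by
      rw [← hφ0, hmkeq]
      simp only [map_sum, map_pow, hp]
    have : AdjoinRoot.mk ((Polynomial.X : Polynomial ℝ) ^ 2) (∑ i, (p i) ^ 2) =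
        AdjoinRoot.mk _ (-Polynomial.X) := by
      rw [hsum, hε, map_neg, AdjoinRoot.mk_X]
    rw [AdjoinRoot.mk_eq_mk] at this
    set s : Polynomial ℝ := ∑ i, (p i) ^ 2 with hs
    have hdvd : (Polynomial.X : Polynomial ℝ) ^ 2 ∣ s + Polynomial.X := by
      simpa [sub_neg_eq_add] using this
    -- each p i vanishes at 0
    have hs0 : s.eval 0 = 0 := by
      obtain ⟨q, hq⟩ := hdvd
      have : s.eval 0 + 0 = 0 := by
        have := congrArg (Polynomial.eval 0) hq
        simpa using this
      linarith
    have hpi0 : ∀ i, (p i).eval 0 = 0 := by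
      have hsum0 : ∑ i, ((p i).eval 0) ^ 2 = 0 := by
        have he : Polynomial.eval 0 s = ∑ i, ((p i).eval 0) ^ 2 := by
          simp [hs, Polynomial.eval_finset_sum]
        rw [← he, hs0]
      intro i
      have := (Finset.sum_eq_zero_iff_of_nonneg
        (fun j _ => sq_nonneg ((p j).eval 0))).mp hsum0 i (Finset.mem_univ i)
      exact pow_eq_zero_iff (n := 2) (by norm_num) |>.mp this
    have hXdvd : ∀ i, (Polynomial.X : Polynomial ℝ) ∣ p i := by
      intro i
      rw [Polynomial.X_dvd_iff, Polynomial.coeff_zero_eq_eval_zero]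
      exact hpi0 i
    have hX2s : (Polynomial.X : Polynomial ℝ) ^ 2 ∣ s := by
      rw [hs]
      refine Finset.dvd_sum fun i _ => ?_
      obtain ⟨r, hr⟩ := hXdvd i
      exact ⟨r ^ 2, by rw [hr]; ring⟩
    have hX2X : (Polynomial.X : Polynomial ℝ) ^ 2 ∣ (Polynomial.X : Polynomial ℝ) := by
      have := dvd_sub hdvd hX2s
      simpa using this
    have := Polynomial.natDegree_le_of_dvd hX2X Polynomial.X_ne_zero
    simp [Polynomial.natDegree_X_pow] at this
end

section
/- Let I = (y² − x⁵, z − x³) ⊆ ℝ[x,y,z] and A = ℝ[x,y,z]/I. The polynomial z is nonnegative on V_ℝ(I), but its image in A is not strongly nonnegative at P = (0,0,0): the ℝ-algebra homomorphism φ : A → ℝ[ε]/(ε⁴) at P with φ(x) = −ε, φ(y) = 0, φ(z) = −ε³ sends z to −ε³, which is not nonnegative. Consequently, z is not k-sos modulo I for any k, and I is not (1,k)-sos for any k ≥ 1. -/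
open MvPolynomial Polynomial

namespace SquigglyAux

open MvPolynomial Polynomial

noncomputable section

/-- Key algebraic fact: `-X³ - Σ hᵢ²` is never divisible by `X⁵` in `ℝ[X]`. -/
lemma sos_aux {r : ℕ} (h : Fin r → Polynomial ℝ)
    (hd : (Polynomial.X : Polynomial ℝ) ^ 5 ∣ (-(Polynomial.X ^ 3) - ∑ i, h i ^ 2)) : False := by
  rw [Polynomial.X_pow_dvd_iff] at hd
  have hSc : ∀ d < 5, (∑ i, h i ^ 2).coeff d = -((Polynomial.X : Polynomial ℝ) ^ 3).coeff d := by
    intro d hd5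
    have := hd d hd5
    rw [Polynomial.coeff_sub, Polynomial.coeff_neg, sub_eq_zero] at this
    linarith [this]
  have hc0 : ∀ i, (h i).coeff 0 = 0 := by
    have hsum : ∑ i, ((h i).coeff 0) ^ 2 = 0 := by
      have := hSc 0 (by norm_num)
      rw [Polynomial.finset_sum_coeff] at this
      simp only [Polynomial.coeff_X_pow] at this
      norm_num at this
      rw [← this]
      refine Finset.sum_congr rfl fun i _ => ?_
      rw [sq, sq, Polynomial.mul_coeff_zero]
    intro i
    have := (Finset.sum_eq_zero_iff_of_nonneg (fun i _ => sq_nonneg _)).mp hsum i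
      (Finset.mem_univ i)
    exact pow_eq_zero_iff (two_ne_zero) |>.mp this
  have hXdvd : ∀ i, ∃ k, h i = Polynomial.X * k := by
    intro i
    exact Polynomial.X_dvd_iff.mpr (hc0 i)
  choose k hk using hXdvd
  have hk0 : ∀ i, (k i).coeff 0 = 0 := by
    have hsum : ∑ i, ((k i).coeff 0) ^ 2 = 0 := by
      have := hSc 2 (by norm_num)
      rw [Polynomial.finset_sum_coeff] at this
      simp only [Polynomial.coeff_X_pow] at this
      norm_num at this
      rw [← this]
      refine Finset.sum_congr rfl fun i _ => ?_
      have h2 : ((Polynomial.X : Polynomial ℝ) ^ 2 * (k i) ^ 2).coeff 2 = ((k i) ^ 2).coeff 0 := by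
        simpa using Polynomial.coeff_X_pow_mul ((k i) ^ 2) 2 0
      rw [hk i, mul_pow, h2, sq (k i), Polynomial.mul_coeff_zero, ← sq]
    intro i
    have := (Finset.sum_eq_zero_iff_of_nonneg (fun i _ => sq_nonneg _)).mp hsum i
      (Finset.mem_univ i)
    exact pow_eq_zero_iff (two_ne_zero) |>.mp this
  have hX4 : (Polynomial.X : Polynomial ℝ) ^ 4 ∣ ∑ i, h i ^ 2 := by
    refine Finset.dvd_sum fun i _ => ?_
    have h2 : (Polynomial.X : Polynomial ℝ) ^ 2 ∣ h i := by
      rw [Polynomial.X_pow_dvd_iff]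
      intro d hd2
      interval_cases d
      · exact hc0 i
      · rw [hk i, Polynomial.coeff_X_mul]
        exact hk0 i
    calc (Polynomial.X : Polynomial ℝ) ^ 4 = ((Polynomial.X : Polynomial ℝ) ^ 2) ^ 2 := by ring
    _ ∣ (h i) ^ 2 := pow_dvd_pow_of_dvd h2 2
  have h3 : (∑ i, h i ^ 2).coeff 3 = 0 := by
    rw [Polynomial.X_pow_dvd_iff] at hX4
    exact hX4 3 (by norm_num)
  have := hSc 3 (by norm_num)
  rw [h3] at this
  simp [Polynomial.coeff_X_pow] at this

end

end SquigglyAux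


/-- For `I = (y² − x⁵, z − x³) ⊆ ℝ[x,y,z]`: the polynomial `z` is nonnegative on `V_ℝ(I)`,
but its image in `A` is not strongly nonnegative at `P = (0,0,0)`, as witnessed by the
homomorphism `φ : A → ℝ[ε]/(ε⁴)` at `P` with `φ(x) = −ε`, `φ(y) = 0`, `φ(z) = −ε³`.
Consequently `z` is not `k`-sos modulo `I` for any `k`, and `I` is not `(1,k)`-sos for any
`k ≥ 1`. -/
theorem squiggly_example :
    ∀ I : Ideal (MvPolynomial (Fin 3) ℝ),
      I = Ideal.span {(MvPolynomial.X 1 : MvPolynomial (Fin 3) ℝ) ^ 2 -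
          (MvPolynomial.X 0) ^ 5, (MvPolynomial.X 2) - (MvPolynomial.X 0) ^ 3} →
    (∀ Q ∈ realVariety I, 0 ≤ MvPolynomial.eval Q (MvPolynomial.X 2 : MvPolynomial (Fin 3) ℝ)) ∧
    (∃ φ : (MvPolynomial (Fin 3) ℝ ⧸ I) →ₐ[ℝ] Eps 4,
      AtPoint I (0 : Fin 3 → ℝ) φ ∧
      φ (Ideal.Quotient.mk I (MvPolynomial.X 0)) =
        - AdjoinRoot.root ((Polynomial.X : Polynomial ℝ) ^ 4) ∧
      φ (Ideal.Quotient.mk I (MvPolynomial.X 1)) = 0 ∧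
      φ (Ideal.Quotient.mk I (MvPolynomial.X 2)) =
        - AdjoinRoot.root ((Polynomial.X : Polynomial ℝ) ^ 4) ^ 3 ∧
      ¬ EpsNonneg (φ (Ideal.Quotient.mk I (MvPolynomial.X 2)))) ∧
    ¬ StronglyNonnegAt I (0 : Fin 3 → ℝ)
      (Ideal.Quotient.mk I (MvPolynomial.X 2 : MvPolynomial (Fin 3) ℝ)) ∧
    (∀ k : ℕ, ¬ KSosMod I k (MvPolynomial.X 2 : MvPolynomial (Fin 3) ℝ)) ∧
    (∀ k : ℕ, 1 ≤ k → ¬ IsDKSos I 1 k) := by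
  intro J hI
  subst hI
  set J : Ideal (MvPolynomial (Fin 3) ℝ) := Ideal.span
    {(MvPolynomial.X 1 : MvPolynomial (Fin 3) ℝ) ^ 2 - (MvPolynomial.X 0) ^ 5,
      (MvPolynomial.X 2) - (MvPolynomial.X 0) ^ 3} with hJ
  -- Part 1 : nonnegativity on the variety
  have part1 : ∀ Q ∈ realVariety J,
      0 ≤ MvPolynomial.eval Q (MvPolynomial.X 2 : MvPolynomial (Fin 3) ℝ) := by
    intro Q hQ
    have h1 := hQ _ (Ideal.subset_span (Set.mem_insert _ _))
    have h2 := hQ _ (Ideal.subset_span (Set.mem_insert_of_mem _ rfl))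
    simp only [map_sub, map_pow, MvPolynomial.eval_X, sub_eq_zero] at h1 h2
    rw [MvPolynomial.eval_X, h2]
    have h5 : (0:ℝ) ≤ Q 0 ^ 5 := by rw [← h1]; positivity
    have h0 : (0:ℝ) ≤ Q 0 := ((Odd.pow_nonneg_iff ⟨2, by norm_num⟩).mp h5)
    positivity
  -- Setup for parts 2,3
  set ε : Eps 4 := AdjoinRoot.root ((Polynomial.X : Polynomial ℝ) ^ 4) with hε
  have hε4 : ε ^ 4 = 0 := by
    rw [hε, ← AdjoinRoot.mk_X, ← map_pow, AdjoinRoot.mk_self]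
  set ψ : MvPolynomial (Fin 3) ℝ →ₐ[ℝ] Eps 4 :=
    MvPolynomial.aeval ![-ε, 0, -ε ^ 3] with hψ
  have hψ0 : ψ (MvPolynomial.X 0) = -ε := by
    rw [hψ, MvPolynomial.aeval_X]; rfl
  have hψ1 : ψ (MvPolynomial.X 1) = 0 := by
    rw [hψ, MvPolynomial.aeval_X]; rfl
  have hψ2 : ψ (MvPolynomial.X 2) = -ε ^ 3 := by
    rw [hψ, MvPolynomial.aeval_X]; rfl
  have hker : ∀ a ∈ J, ψ a = 0 := by
    intro a ha
    have hle : J ≤ RingHom.ker ψ.toRingHom := by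
      rw [hJ, Ideal.span_le]
      rintro q hq
      simp only [Set.mem_insert_iff, Set.mem_singleton_iff] at hq
      rcases hq with rfl | rfl
      · show ψ _ = 0
        rw [map_sub, map_pow, map_pow, hψ0, hψ1]
        linear_combination ε * hε4
      · show ψ _ = 0
        rw [map_sub, map_pow, hψ2, hψ0]
        ring
    exact hle ha
  set φ : (MvPolynomial (Fin 3) ℝ ⧸ J) →ₐ[ℝ] Eps 4 := Ideal.Quotient.liftₐ J ψ hker with hφdef
  have hφ : ∀ p, φ (Ideal.Quotient.mk J p) = ψ p := by
    intro p
    rw [hφdef, Ideal.Quotient.liftₐ_apply]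
    rfl
  have hXmem : ∀ i : Fin 3, ψ (MvPolynomial.X i) ∈
      Ideal.span {AdjoinRoot.root ((Polynomial.X : Polynomial ℝ) ^ 4)} := by
    intro i
    rw [← hε]
    fin_cases i
    · show ψ (MvPolynomial.X 0) ∈ _
      rw [hψ0]; exact neg_mem (Ideal.subset_span rfl)
    · show ψ (MvPolynomial.X 1) ∈ _
      rw [hψ1]; exact Ideal.zero_mem _
    · show ψ (MvPolynomial.X 2) ∈ _
      rw [hψ2, Ideal.mem_span_singleton]
      exact dvd_neg.mpr (dvd_pow_self ε three_ne_zero)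
  have hAt : AtPoint J (0 : Fin 3 → ℝ) φ := by
    intro p
    rw [hφ]
    induction p using MvPolynomial.induction_on with
    | C a =>
        rw [hψ, MvPolynomial.aeval_C, MvPolynomial.eval_C, sub_self]
        exact Ideal.zero_mem _
    | add p q hp hq =>
        rw [map_add, map_add, map_add, add_sub_add_comm]
        exact Ideal.add_mem _ hp hq
    | mul_X p i hp =>
        rw [map_mul, map_mul, MvPolynomial.eval_X, Pi.zero_apply, mul_zero, map_zero, sub_zero]
        exact Ideal.mul_mem_left _ _ (hXmem i)
  have hnn : ¬ EpsNonneg (-ε ^ 3) := by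
    have hmk : (-ε ^ 3) = AdjoinRoot.mk _ (-(Polynomial.X ^ 3)) := by
      rw [map_neg, map_pow, AdjoinRoot.mk_X, hε]
    rintro (h0 | ⟨p, hp, hpos⟩)
    · rw [hmk, AdjoinRoot.mk_eq_zero, dvd_neg, Polynomial.X_pow_dvd_iff] at h0
      have := h0 3 (by norm_num)
      simp [Polynomial.coeff_X_pow] at this
    · rw [hmk, AdjoinRoot.mk_eq_mk, Polynomial.X_pow_dvd_iff] at hp
      have hc : ∀ d < 4, p.coeff d + (Polynomial.X ^ 3 : Polynomial ℝ).coeff d = 0 := by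
        intro d hd
        have := hp d hd
        rwa [sub_neg_eq_add, Polynomial.coeff_add] at this
      have hc3 : p.coeff 3 = -1 := by
        have := hc 3 (by norm_num)
        norm_num [Polynomial.coeff_X_pow] at this
        linarith
      have hp0 : p ≠ 0 := by
        intro h
        rw [h] at hc3
        simp at hc3
      have hlow : ∀ m < 3, p.coeff m = 0 := by
        intro m hm
        have := hc m (by omega)
        have h3m : m ≠ 3 := by omega
        simpa [Polynomial.coeff_X_pow, h3m, (by omega : ¬ (3 = m))] using this
      have hdeg : p.natTrailingDegree = 3 :=
        le_antisymm (Polynomial.natTrailingDegree_le_of_ne_zero (by rw [hc3]; norm_num))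
          (Polynomial.le_natTrailingDegree hp0 hlow)
      rw [hdeg, hc3] at hpos
      linarith
  -- Part 4
  have part4 : ∀ k : ℕ, ¬ KSosMod J k (MvPolynomial.X 2 : MvPolynomial (Fin 3) ℝ) := by
    rintro k ⟨r, g, hdeg, hmem⟩
    set σ : MvPolynomial (Fin 3) ℝ →ₐ[ℝ] Polynomial ℝ :=
      MvPolynomial.aeval ![-Polynomial.X, 0, -Polynomial.X ^ 3] with hσdef
    have hσ0 : σ (MvPolynomial.X 0) = -Polynomial.X := by
      rw [hσdef, MvPolynomial.aeval_X]; rfl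
    have hσ1 : σ (MvPolynomial.X 1) = 0 := by
      rw [hσdef, MvPolynomial.aeval_X]; rfl
    have hσ2 : σ (MvPolynomial.X 2) = -Polynomial.X ^ 3 := by
      rw [hσdef, MvPolynomial.aeval_X]; rfl
    have hσI : ∀ a ∈ J, σ a ∈ Ideal.span {(Polynomial.X : Polynomial ℝ) ^ 5} := by
      intro a ha
      have hle : J ≤ Ideal.comap σ.toRingHom
          (Ideal.span {(Polynomial.X : Polynomial ℝ) ^ 5}) := by
        rw [hJ, Ideal.span_le]
        rintro q hq
        simp only [Set.mem_insert_iff, Set.mem_singleton_iff] at hq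
        rcases hq with rfl | rfl
        · rw [SetLike.mem_coe, Ideal.mem_comap]
          show σ _ ∈ _
          have h1 : σ ((MvPolynomial.X 1 : MvPolynomial (Fin 3) ℝ) ^ 2 - MvPolynomial.X 0 ^ 5) =
              Polynomial.X ^ 5 := by
            rw [map_sub, map_pow, map_pow, hσ0, hσ1]; ring
          rw [h1]
          exact Ideal.subset_span rfl
        · rw [SetLike.mem_coe, Ideal.mem_comap]
          show σ _ ∈ _
          have h2 : σ ((MvPolynomial.X 2 : MvPolynomial (Fin 3) ℝ) - MvPolynomial.X 0 ^ 3) =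
              0 := by
            rw [map_sub, map_pow, hσ0, hσ2]; ring
          rw [h2]
          exact Ideal.zero_mem _
      exact hle ha
    have hmem' := hσI _ hmem
    rw [map_sub, map_sum, hσ2, Ideal.mem_span_singleton] at hmem'
    refine SquigglyAux.sos_aux (fun i => σ (g i)) ?_
    have hrw : (-(Polynomial.X ^ 3) - ∑ i, (σ (g i)) ^ 2 : Polynomial ℝ) =
        -Polynomial.X ^ 3 - ∑ i, σ (g i ^ 2) := by
      simp [map_pow]
    rw [hrw]
    exact hmem'
  refine ⟨part1, ⟨φ, hAt, ?_, ?_, ?_, ?_⟩, ?_, part4, ?_⟩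
  · rw [hφ, hψ0, hε]
  · rw [hφ, hψ1]
  · rw [hφ, hψ2, hε]
  · rw [hφ, hψ2]; exact hnn
  · intro hS
    exact hnn (hψ2 ▸ hφ _ ▸ hS 4 φ hAt)
  · intro k hk hDK
    refine part4 k (hDK (MvPolynomial.X 2) ?_ part1)
    rw [MvPolynomial.totalDegree_X]
end
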